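/- Let d ≥ 1 and K ≥ d². Let Σ₁,…,Σ_K be real d×d matrices, let c ∈ ℝ^d with c ≠ 0, and set g_k = Σ_k c for k = 1,…,K. If the d² × K matrix with columns vec(Σ₁),…,vec(Σ_K) has rank d², then rank(Σ_{k=1}^K g_k g_kᵀ) = d; equivalently, the vectors g₁,…,g_K span ℝ^d. (This is the linear-algebraic content of Proposition 2: with g_k the population cross-covariance vectors g_k = Σ_x(k)(B⊙A)ᵀω and c = (B⊙A)ᵀω ≠ 0, it yields rank(G) = d for G = Σ_k g_k g_kᵀ.) -/

import Mathlib

open Matrix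

theorem stmt2 (d K : ℕ) (hd : 1 ≤ d) (hK : d ^ 2 ≤ K)
    (S : Fin K → Matrix (Fin d) (Fin d) ℝ) (c : Fin d → ℝ) (hc : c ≠ 0)
    (g : Fin K → Fin d → ℝ) (hg : ∀ k, g k = (S k).mulVec c)
    (hrank : (Matrix.of fun (ij : Fin d × Fin d) (k : Fin K) => S k ij.1 ij.2).rank = d ^ 2) :
    (∑ k, Matrix.vecMulVec (g k) (g k)).rank = d ∧
      Submodule.span ℝ (Set.range g) = ⊤ := by
  -- the big vectorization matrix
  set M : Matrix (Fin d × Fin d) (Fin K) ℝ :=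
    Matrix.of fun (ij : Fin d × Fin d) (k : Fin K) => S k ij.1 ij.2 with hM
  -- its mulVecLin is surjective
  have hsurj : LinearMap.range M.mulVecLin = ⊤ := by
    apply Submodule.eq_top_of_finrank_eq
    have : Module.finrank ℝ (Fin d × Fin d → ℝ) = d ^ 2 := by
      simp [Module.finrank_pi, sq]
    rw [this]
    exact hrank
  -- pick a coordinate where c is nonzero
  obtain ⟨i, hci⟩ : ∃ i, c i ≠ 0 := by
    by_contra h
    push_neg at h
    exact hc (funext h)
  -- span of g is everything
  have hspan : Submodule.span ℝ (Set.range g) = ⊤ := by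
    rw [eq_top_iff]
    intro y _
    -- target function
    set f : Fin d × Fin d → ℝ := fun ab => if ab.2 = i then y ab.1 / c i else 0 with hf
    have : f ∈ LinearMap.range M.mulVecLin := hsurj ▸ Submodule.mem_top
    obtain ⟨x, hx⟩ := this
    have hy : y = ∑ k, x k • g k := by
      funext a
      have hxa := congrFun hx (a, i)
      simp only [Matrix.mulVecLin_apply, Matrix.mulVec, dotProduct, hM,
        Matrix.of_apply, hf, if_pos rfl] at hxa
      calc y a = (∑ b, (∑ k, S k a b * x k) * c b) := by
            rw [Finset.sum_eq_single i]
            · rw [hxa]; field_simp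
            · intro b _ hb
              have hxb := congrFun hx (a, b)
              simp only [Matrix.mulVecLin_apply, Matrix.mulVec, dotProduct, hM,
                Matrix.of_apply, hf, if_neg hb] at hxb
              rw [hxb, zero_mul]
            · intro h; exact absurd (Finset.mem_univ i) h
        _ = ∑ k, x k * ∑ b, S k a b * c b := by
            simp_rw [Finset.sum_mul, Finset.mul_sum]
            rw [Finset.sum_comm]
            congr 1; funext k; congr 1; funext b; ring
        _ = (∑ k, x k • g k) a := by
            simp [hg, Matrix.mulVec, dotProduct, Finset.sum_apply]
    rw [hy]
    exact Submodule.sum_mem _ fun k _ =>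
      Submodule.smul_mem _ _ (Submodule.subset_span ⟨k, rfl⟩)
  refine ⟨?_, hspan⟩
  -- the Gram matrix is B * Bᵀ with Bᵀ k = g k
  set B : Matrix (Fin d) (Fin K) ℝ := Matrix.of fun a k => g k a with hB
  have hsum : (∑ k, Matrix.vecMulVec (g k) (g k)) = B * Bᵀ := by
    ext a b
    rw [Matrix.sum_apply]
    simp [Matrix.mul_apply, Matrix.vecMulVec_apply, hB]
  rw [hsum, Matrix.rank_self_mul_transpose]
  have hBT : Bᵀ = Matrix.of fun k a => g k a := rfl
  have : Set.range B.col = Set.range g := by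
    ext v; constructor
    · rintro ⟨k, rfl⟩; exact ⟨k, rfl⟩
    · rintro ⟨k, rfl⟩; exact ⟨k, rfl⟩
  rw [Matrix.rank, Matrix.range_mulVecLin, this, hspan]
  simp [Module.finrank_pi]
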